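/- Let X and Y be random variables on a probability space with joint law P_{XY} and marginal laws P_X, P_Y. For every measurable critic function f : 𝒳 × 𝒴 → ℝ and every measurable function a : 𝒴 → ℝ with a(y) > 0 for all y, if (x,y) ↦ f(x,y) − log a(y) is P_{XY}-integrable and (x,y) ↦ e^{f(x,y)}/a(y) is (P_X ⊗ P_Y)-integrable, then the mutual information satisfies the TUBA lower bound I(X;Y) ≥ E_{P_{XY}}[f(X,Y) − log a(Y)] − E_{P_X ⊗ P_Y}[e^{f(x,y)}/a(y)]. -/

import Mathlib

open MeasureTheory Real

open Classical in
/-- Kullback–Leibler divergence between two measures, valued in the extended reals: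
it is the integral of the log-likelihood ratio when `μ ≪ ν` and the log-likelihood
ratio is `μ`-integrable, and `⊤` otherwise. -/
noncomputable def klDiv {α : Type*} [MeasurableSpace α] (μ ν : Measure α) : EReal :=
  if μ ≪ ν ∧ Integrable (llr μ ν) μ then ((∫ x, llr μ ν x ∂μ : ℝ) : EReal) else ⊤

/-- Mutual information between random variables `X` and `Y` on a probability space
`(Ω, P)`: the KL divergence between the joint law of `(X, Y)` and the product of the
marginal laws of `X` and `Y`. -/
noncomputable def mutualInfo {Ω 𝒳 𝒴 : Type*} [MeasurableSpace Ω] [MeasurableSpace 𝒳]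
    [MeasurableSpace 𝒴] (P : Measure Ω) (X : Ω → 𝒳) (Y : Ω → 𝒴) : EReal :=
  klDiv (P.map (fun ω => (X ω, Y ω))) ((P.map X).prod (P.map Y))


lemma my_integral_llr_nonneg {α : Type*} [MeasurableSpace α] {μ ν : Measure α}
    [IsProbabilityMeasure μ] [IsProbabilityMeasure ν] (hμν : μ ≪ ν)
    (h_int : Integrable (llr μ ν) μ) : 0 ≤ ∫ x, llr μ ν x ∂μ := by
  have h1 : Integrable (fun x => (ν.rnDeriv μ x).toReal) μ :=
    Measure.integrable_toReal_rnDeriv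
  have h2 : ∫ x, (ν.rnDeriv μ x).toReal ∂μ ≤ 1 := by
    have := Measure.setIntegral_toReal_rnDeriv_le (μ := ν) (ν := μ)
      (s := Set.univ) (by simp)
    simpa using this
  have h3 : ∫ x, - llr μ ν x ∂μ ≤ ∫ x, ((ν.rnDeriv μ x).toReal - 1) ∂μ := by
    refine integral_mono_ae h_int.neg (h1.sub (integrable_const 1)) ?_
    filter_upwards [exp_neg_llr hμν] with x hx
    have := Real.add_one_le_exp (- llr μ ν x)
    rw [hx] at this
    linarith
  have h4 : ∫ x, ((ν.rnDeriv μ x).toReal - 1) ∂μ ≤ 0 := by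
    rw [integral_sub h1 (integrable_const 1)]
    simp only [integral_const, probReal_univ, smul_eq_mul, one_mul]
    linarith
  rw [integral_neg] at h3
  linarith

lemma my_gibbs {α : Type*} [MeasurableSpace α] {μ ν : Measure α}
    [IsProbabilityMeasure μ] [IsProbabilityMeasure ν] (hμν : μ ≪ ν)
    (h_int : Integrable (llr μ ν) μ) (g : α → ℝ) (hgμ : Integrable g μ)
    (hgν : Integrable (fun x => exp (g x)) ν) :
    ∫ x, g x ∂μ - ∫ x, exp (g x) ∂ν ≤ ∫ x, llr μ ν x ∂μ := by
  have hZ : 0 < ∫ x, exp (g x) ∂ν := integral_exp_pos hgν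
  haveI : IsProbabilityMeasure (ν.tilted g) := isProbabilityMeasure_tilted hgν
  have hμν' : μ ≪ ν.tilted g := hμν.trans (absolutelyContinuous_tilted hgν)
  have hint' : Integrable (llr μ (ν.tilted g)) μ :=
    integrable_llr_tilted_right hμν hgμ h_int hgν
  have heq := integral_llr_tilted_right hμν hgμ hgν h_int
  have h0 : 0 ≤ ∫ x, llr μ (ν.tilted g) x ∂μ := my_integral_llr_nonneg hμν' hint'
  have hlog : log (∫ x, exp (g x) ∂ν) ≤ ∫ x, exp (g x) ∂ν := by
    have := log_le_sub_one_of_pos hZ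
    linarith
  rw [heq] at h0
  linarith

/-- **TUBA lower bound on mutual information.** For every measurable critic
`f : 𝒳 × 𝒴 → ℝ` and every measurable `a : 𝒴 → ℝ` with `a y > 0` for all `y`, if
`(x,y) ↦ f (x,y) - log (a y)` is integrable w.r.t. the joint law `P_{XY}` and
`(x,y) ↦ exp (f (x,y)) / a y` is integrable w.r.t. the product of the marginals
`P_X ⊗ P_Y`, then
`I(X;Y) ≥ E_{P_{XY}}[f(X,Y) - log a(Y)] - E_{P_X ⊗ P_Y}[e^{f(x,y)} / a(y)]`. -/
theorem mutualInfo_ge_tuba {Ω 𝒳 𝒴 : Type*} [MeasurableSpace Ω] [MeasurableSpace 𝒳]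
    [MeasurableSpace 𝒴] (P : Measure Ω) [IsProbabilityMeasure P]
    (X : Ω → 𝒳) (Y : Ω → 𝒴) (hX : Measurable X) (hY : Measurable Y)
    (f : 𝒳 × 𝒴 → ℝ) (hf : Measurable f)
    (a : 𝒴 → ℝ) (ha : Measurable a) (ha_pos : ∀ y, 0 < a y)
    (h_int₁ : Integrable (fun p => f p - Real.log (a p.2))
      (P.map (fun ω => (X ω, Y ω))))
    (h_int₂ : Integrable (fun p => Real.exp (f p) / a p.2)
      ((P.map X).prod (P.map Y))) :
    ((∫ p, (f p - Real.log (a p.2)) ∂(P.map (fun ω => (X ω, Y ω)))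
        - ∫ p, Real.exp (f p) / a p.2 ∂((P.map X).prod (P.map Y)) : ℝ) : EReal)
      ≤ mutualInfo P X Y := by
  classical
  haveI : IsProbabilityMeasure (P.map (fun ω => (X ω, Y ω))) :=
    Measure.isProbabilityMeasure_map (hX.prodMk hY).aemeasurable
  haveI : IsProbabilityMeasure (P.map X) := Measure.isProbabilityMeasure_map hX.aemeasurable
  haveI : IsProbabilityMeasure (P.map Y) := Measure.isProbabilityMeasure_map hY.aemeasurable
  have hexp : (fun p : 𝒳 × 𝒴 => exp (f p - log (a p.2)))
      = fun p => exp (f p) / a p.2 := by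
    funext p
    rw [Real.exp_sub, Real.exp_log (ha_pos _)]
  rw [mutualInfo, klDiv]
  split_ifs with h
  · rw [EReal.coe_le_coe_iff]
    have := my_gibbs h.1 h.2 (fun p => f p - log (a p.2)) h_int₁ (by rw [hexp]; exact h_int₂)
    rwa [hexp] at this
  · exact le_top
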